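/- Orthogonality of wavelet products at separated scales: let w be a Schwartz function on ℝ with Fourier transform supported in [2/3, 8/3], and w_I the associated wavelets. Let I', I, J', J be dyadic intervals with 8|I'| < |I|, 8|J'| < |J|, and 16|I'| < |J'|. Then the functions w_{I'}·conjugate(w_I) and w_{J'}·conjugate(w_J) are orthogonal in L²(ℝ). -/

import Mathlib

open MeasureTheory SchwartzMap
open scoped FourierTransform

/-- The wavelet `w_I` adapted to the dyadic interval `I = [2^k j, 2^k (j+1))`,
namely `w_I(x) = |I|^{-1/2} w((x - c(I))/|I|)` with `c(I) = 2^k (j + 1/2)`. -/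
noncomputable def wave (w : ℝ → ℂ) (k j : ℤ) : ℝ → ℂ := fun x =>
  ((Real.sqrt ((2 : ℝ) ^ k) : ℝ) : ℂ)⁻¹ *
    w ((x - (2 : ℝ) ^ k * ((j : ℝ) + 1 / 2)) / (2 : ℝ) ^ k)

open Complex Real
open scoped ComplexConjugate

noncomputable def ce (t : ℝ) : ℂ := Complex.exp ((2 * π * t : ℝ) * Complex.I)

lemma ce_norm (t : ℝ) : ‖ce t‖ = 1 := Complex.norm_exp_ofReal_mul_I _

lemma ce_add (a b : ℝ) : ce (a + b) = ce a * ce b := by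
  rw [ce, ce, ce, ← Complex.exp_add]
  congr 1
  push_cast
  ring

lemma ce_conj (t : ℝ) : conj (ce t) = ce (-t) := by
  rw [ce, ce, ← Complex.exp_conj]
  congr 1
  simp only [map_mul, Complex.conj_ofReal, Complex.conj_I]
  push_cast
  ring

lemma ce_continuous : Continuous ce := by
  unfold ce; fun_prop

lemma fourier_eq (f : ℝ → ℂ) (ξ : ℝ) : 𝓕 f ξ = ∫ x : ℝ, ce (-(x * ξ)) * f x := by
  rw [Real.fourier_real_eq_integral_exp_smul]
  congr 1; funext x
  rw [smul_eq_mul, ce]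
  congr 2
  push_cast
  ring

lemma two_zpow_pos (k : ℤ) : (0:ℝ) < (2:ℝ) ^ k := zpow_pos (by norm_num) k


lemma fourier_dil (f : ℝ → ℂ) (c s m : ℝ) (hs : 0 < s) (ξ : ℝ) :
    𝓕 (fun x => ((c : ℝ) : ℂ)⁻¹ * f ((x - m) / s)) ξ
      = ((s : ℝ) : ℂ) * ((c : ℝ) : ℂ)⁻¹ * (ce (-(m * ξ)) * 𝓕 f (s * ξ)) := by
  rw [fourier_eq]
  set F : ℝ → ℂ := fun x => ce (-(x * ξ)) * (((c : ℝ) : ℂ)⁻¹ * f ((x - m) / s)) with hF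
  have h1 : (∫ y : ℝ, F (s * y + m)) = |s⁻¹| • ∫ x : ℝ, F x := by
    rw [show (fun y : ℝ => F (s * y + m)) = fun y : ℝ => (fun z : ℝ => F (z + m)) (s * y) from rfl]
    rw [MeasureTheory.Measure.integral_comp_mul_left (fun z : ℝ => F (z + m)) s]
    rw [integral_add_right_eq_self]
  have h2 : (∫ x : ℝ, F x) = |s| • ∫ y : ℝ, F (s * y + m) := by
    rw [h1, smul_smul, ← abs_mul, mul_inv_cancel₀ hs.ne', abs_one, one_smul]
  calc (∫ x : ℝ, ce (-(x * ξ)) * (((c : ℝ) : ℂ)⁻¹ * f ((x - m) / s))) = ∫ x : ℝ, F x := rfl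
    _ = |s| • ∫ y : ℝ, F (s * y + m) := h2
    _ = |s| • ∫ y : ℝ, ((c : ℝ) : ℂ)⁻¹ * ce (-(m * ξ)) * (ce (-(y * (s * ξ))) * f y) := by
        congr 1
        congr 1
        funext y
        rw [hF]
        simp only
        rw [show (s * y + m - m) / s = y by field_simp; ring]
        rw [show -((s * y + m) * ξ) = -(y * (s * ξ)) + -(m * ξ) by ring, ce_add]
        ring
    _ = |s| • (((c : ℝ) : ℂ)⁻¹ * ce (-(m * ξ)) * ∫ y : ℝ, ce (-(y * (s * ξ))) * f y) := by
        rw [integral_const_mul]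
    _ = ((s : ℝ) : ℂ) * ((c : ℝ) : ℂ)⁻¹ * (ce (-(m * ξ)) * 𝓕 f (s * ξ)) := by
        rw [← _root_.fourier_eq, abs_of_pos hs, Complex.real_smul]
        ring

lemma fourier_wave (w : 𝓢(ℝ, ℂ)) (k j : ℤ) (ξ : ℝ) :
    𝓕 (wave (⇑w) k j) ξ = (((2:ℝ)^k : ℝ) : ℂ) * ((Real.sqrt ((2:ℝ)^k) : ℝ) : ℂ)⁻¹ *
      (ce (-(((2:ℝ)^k * ((j:ℝ) + 1/2)) * ξ)) * 𝓕 ⇑w ((2:ℝ)^k * ξ)) :=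
  fourier_dil ⇑w (Real.sqrt ((2:ℝ)^k)) ((2:ℝ)^k) ((2:ℝ)^k * ((j:ℝ) + 1/2)) (two_zpow_pos k) ξ

lemma wave_continuous (w : 𝓢(ℝ, ℂ)) (k j : ℤ) : Continuous (wave (⇑w) k j) := by
  unfold wave
  exact continuous_const.mul (w.continuous.comp (by fun_prop))

lemma wave_integrable (w : 𝓢(ℝ, ℂ)) (k j : ℤ) : Integrable (wave (⇑w) k j) := by
  have h0 : Integrable (fun x : ℝ => w (x / (2:ℝ)^k)) := w.integrable.comp_div (two_zpow_pos k).ne'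
  have h1 : Integrable (fun x : ℝ => w ((x - (2:ℝ)^k * ((j:ℝ) + 1/2)) / (2:ℝ)^k)) :=
    h0.comp_sub_right ((2:ℝ)^k * ((j:ℝ) + 1/2))
  exact h1.const_mul _

lemma wave_bound (w : 𝓢(ℝ, ℂ)) (k j : ℤ) : ∃ C, ∀ x, ‖wave (⇑w) k j x‖ ≤ C := by
  obtain ⟨C, hC⟩ := w.decay 0 0
  have hC' : ∀ y, ‖w y‖ ≤ C := fun y => by simpa using hC.2 y
  refine ⟨‖((Real.sqrt ((2:ℝ)^k) : ℝ) : ℂ)⁻¹‖ * C, fun x => ?_⟩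
  simp only [wave, norm_mul]
  exact mul_le_mul_of_nonneg_left (hC' _) (norm_nonneg _)

lemma fourierW_integrable (w : 𝓢(ℝ, ℂ)) : Integrable (𝓕 ⇑w) := by
  have := ((SchwartzMap.fourierTransformCLM ℂ w).integrable (μ := volume))
  rwa [SchwartzMap.fourierTransformCLM_apply] at this

lemma fourierW_continuous (w : 𝓢(ℝ, ℂ)) : Continuous (𝓕 ⇑w) := by
  have := (SchwartzMap.fourierTransformCLM ℂ w).continuous
  rwa [SchwartzMap.fourierTransformCLM_apply] at this

lemma fourier_wave_continuous (w : 𝓢(ℝ, ℂ)) (k j : ℤ) : Continuous (𝓕 (wave (⇑w) k j)) := by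
  rw [funext (fourier_wave w k j)]
  exact continuous_const.mul ((ce_continuous.comp (by fun_prop)).mul
    ((fourierW_continuous w).comp (by fun_prop)))

lemma fourier_wave_integrable (w : 𝓢(ℝ, ℂ)) (k j : ℤ) : Integrable (𝓕 (wave (⇑w) k j)) := by
  rw [funext (fourier_wave w k j)]
  have h1 : Integrable (fun ξ : ℝ => 𝓕 ⇑w ((2:ℝ)^k * ξ)) :=
    (fourierW_integrable w).comp_mul_left' (two_zpow_pos k).ne'
  have h2 : Integrable (fun ξ : ℝ =>
      ce (-(((2:ℝ)^k * ((j:ℝ) + 1/2)) * ξ)) * 𝓕 ⇑w ((2:ℝ)^k * ξ)) :=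
    h1.bdd_mul (ce_continuous.comp (by fun_prop)).aestronglyMeasurable
      (Filter.Eventually.of_forall fun ξ => le_of_eq (ce_norm _))
  exact h2.const_mul _

lemma wave_expand (w : 𝓢(ℝ, ℂ)) (k j : ℤ) (x : ℝ) :
    wave (⇑w) k j x = ∫ ξ : ℝ, 𝓕 (wave (⇑w) k j) ξ * ce (x * ξ) := by
  have h := Continuous.fourierInv_fourier_eq (wave_continuous w k j) (wave_integrable w k j)
    (fourier_wave_integrable w k j)
  calc wave (⇑w) k j x = 𝓕⁻ (𝓕 (wave (⇑w) k j)) x := (congrFun h x).symm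
    _ = 𝓕 (𝓕 (wave (⇑w) k j)) (-x) := Real.fourierInv_eq_fourier_neg _ _
    _ = ∫ ξ : ℝ, ce (-(ξ * -x)) * 𝓕 (wave (⇑w) k j) ξ := _root_.fourier_eq _ _
    _ = ∫ ξ : ℝ, 𝓕 (wave (⇑w) k j) ξ * ce (x * ξ) := by
        congr 1; funext ξ
        rw [show -(ξ * -x) = x * ξ by ring]
        ring

lemma conj_wave_expand (w : 𝓢(ℝ, ℂ)) (k j : ℤ) (x : ℝ) :
    conj (wave (⇑w) k j x) = ∫ ξ : ℝ, conj (𝓕 (wave (⇑w) k j) ξ) * ce (-(x * ξ)) := by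
  rw [wave_expand w k j x, ← integral_conj]
  congr 1; funext ξ
  rw [map_mul, ce_conj]

lemma fourier_wave_vanish (w : 𝓢(ℝ, ℂ))
    (hsupp : ∀ ξ : ℝ, ξ ∉ Set.Icc (2 / 3 : ℝ) (8 / 3) → 𝓕 ⇑w ξ = 0)
    (k j : ℤ) (ξ : ℝ) (h : (2:ℝ)^k * ξ ∉ Set.Icc (2 / 3 : ℝ) (8 / 3)) :
    𝓕 (wave (⇑w) k j) ξ = 0 := by
  rw [fourier_wave, hsupp _ h, mul_zero, mul_zero]

lemma integrable_conj' {f : ℝ → ℂ} (hf : Integrable f) (hc : Continuous f) :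
    Integrable (fun x => conj (f x)) := by
  refine hf.norm.mono' ((continuous_star.comp hc).aestronglyMeasurable) ?_
  filter_upwards with x
  simp [RCLike.norm_conj]

lemma key (F G : ℝ → ℂ) (K : ℝ → ℝ → ℂ)
    (hFc : Continuous F) (hF : Integrable F)
    (hGc : Continuous G) (hG : Integrable G)
    (hKc : Continuous fun p : ℝ × ℝ => K p.1 p.2)
    (hK1 : ∀ x ξ, ‖K x ξ‖ = 1) :
    ∫ x : ℝ, (∫ ξ : ℝ, F ξ * K x ξ) * G x = ∫ ξ : ℝ, F ξ * ∫ x : ℝ, K x ξ * G x := by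
  have hprod : Integrable (fun p : ℝ × ℝ => F p.2 * K p.1 p.2 * G p.1)
      ((volume : Measure ℝ).prod volume) := by
    have h1 : Integrable (fun p : ℝ × ℝ => G p.1 * F p.2) ((volume : Measure ℝ).prod volume) :=
      hG.mul_prod hF
    refine h1.norm.mono'
      (((hFc.comp continuous_snd).mul hKc |>.mul (hGc.comp continuous_fst)).aestronglyMeasurable)
      ?_
    filter_upwards with p
    rw [norm_mul, norm_mul, hK1, mul_one, norm_mul]
    exact le_of_eq (mul_comm _ _)
  have swap := MeasureTheory.integral_integral_swap
    (f := fun x ξ => F ξ * K x ξ * G x) (by exact hprod)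
  calc ∫ x : ℝ, (∫ ξ : ℝ, F ξ * K x ξ) * G x
      = ∫ x : ℝ, ∫ ξ : ℝ, F ξ * K x ξ * G x := by
        congr 1; funext x; rw [← integral_mul_const]
    _ = ∫ ξ : ℝ, ∫ x : ℝ, F ξ * K x ξ * G x := swap
    _ = ∫ ξ : ℝ, F ξ * ∫ x : ℝ, K x ξ * G x := by
        congr 1; funext ξ
        simp_rw [mul_assoc]
        rw [integral_const_mul]

lemma arith {s1 s2 s3 s4 ξ1 ξ2 ξ3 : ℝ} (hs1 : 0 < s1) (hs3 : 0 < s3)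
    (hI : 8 * s1 < s2) (hJ : 8 * s3 < s4) (hIJ : 16 * s1 < s3)
    (m1 : s1 * ξ1 ∈ Set.Icc (2/3 : ℝ) (8/3)) (m2 : s2 * ξ2 ∈ Set.Icc (2/3 : ℝ) (8/3))
    (m3 : s3 * ξ3 ∈ Set.Icc (2/3 : ℝ) (8/3)) :
    s4 * (ξ2 + ξ3 - ξ1) ∉ Set.Icc (2/3 : ℝ) (8/3) := by
  rintro ⟨h4l, h4u⟩
  obtain ⟨h1l, h1u⟩ := m1
  obtain ⟨h2l, h2u⟩ := m2
  obtain ⟨h3l, h3u⟩ := m3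
  have hs2 : 0 < s2 := lt_trans (by positivity) hI
  have hs4 : 0 < s4 := lt_trans (by positivity) hJ
  have hx2 : 0 < ξ2 := by
    by_contra h
    push_neg at h
    nlinarith [mul_nonpos_of_nonneg_of_nonpos hs2.le h]
  have hx3 : 0 < ξ3 := by
    by_contra h
    push_neg at h
    nlinarith [mul_nonpos_of_nonneg_of_nonpos hs3.le h]
  have hx4 : 0 < ξ2 + ξ3 - ξ1 := by
    by_contra h
    push_neg at h
    nlinarith [mul_nonpos_of_nonneg_of_nonpos hs4.le h]
  have k2 : s1 * ξ2 < 1/3 := by nlinarith [mul_lt_mul_of_pos_right hI hx2]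
  have k3 : s1 * ξ3 < 1/6 := by nlinarith [mul_lt_mul_of_pos_right hIJ hx3]
  nlinarith [mul_pos hs1 hx4]

theorem hankel_stmt19 (w : 𝓢(ℝ, ℂ))
    (hsupp : ∀ ξ : ℝ, ξ ∉ Set.Icc (2 / 3 : ℝ) (8 / 3) → 𝓕 ⇑w ξ = 0)
    (kI jI kI' jI' kJ jJ kJ' jJ' : ℤ)
    (hI : 8 * (2 : ℝ) ^ kI' < (2 : ℝ) ^ kI)
    (hJ : 8 * (2 : ℝ) ^ kJ' < (2 : ℝ) ^ kJ)
    (hIJ : 16 * (2 : ℝ) ^ kI' < (2 : ℝ) ^ kJ') :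
    ∫ x : ℝ, (wave (⇑w) kI' jI' x * (starRingEnd ℂ) (wave (⇑w) kI jI x)) *
        (starRingEnd ℂ) (wave (⇑w) kJ' jJ' x * (starRingEnd ℂ) (wave (⇑w) kJ jJ x)) = 0 := by
  have hVc := wave_continuous w kJ jJ
  have hVint := wave_integrable w kJ jJ
  have hvc := wave_continuous w kJ' jJ'
  have hUc := wave_continuous w kI jI
  obtain ⟨Cv, hCv⟩ := wave_bound w kJ' jJ'
  obtain ⟨CU, hCU⟩ := wave_bound w kI jI
  have hG2 : Integrable (fun x : ℝ => conj (wave (⇑w) kJ' jJ' x) * wave (⇑w) kJ jJ x) :=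
    hVint.bdd_mul (by exact (continuous_star.comp hvc).aestronglyMeasurable)
      (Filter.Eventually.of_forall fun x => by rw [RCLike.norm_conj]; exact hCv x)
  have hG2c : Continuous (fun x : ℝ => conj (wave (⇑w) kJ' jJ' x) * wave (⇑w) kJ jJ x) := by
    exact (continuous_star.comp hvc).mul hVc
  have hG1 : Integrable (fun x : ℝ => conj (wave (⇑w) kI jI x) *
      (conj (wave (⇑w) kJ' jJ' x) * wave (⇑w) kJ jJ x)) :=
    hG2.bdd_mul (by exact (continuous_star.comp hUc).aestronglyMeasurable)
      (Filter.Eventually.of_forall fun x => by rw [RCLike.norm_conj]; exact hCU x)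
  have hG1c : Continuous (fun x : ℝ => conj (wave (⇑w) kI jI x) *
      (conj (wave (⇑w) kJ' jJ' x) * wave (⇑w) kJ jJ x)) := by
    exact (continuous_star.comp hUc).mul hG2c
  calc ∫ x : ℝ, (wave (⇑w) kI' jI' x * (starRingEnd ℂ) (wave (⇑w) kI jI x)) *
        (starRingEnd ℂ) (wave (⇑w) kJ' jJ' x * (starRingEnd ℂ) (wave (⇑w) kJ jJ x))
      = ∫ x : ℝ, wave (⇑w) kI' jI' x * (conj (wave (⇑w) kI jI x) *
          (conj (wave (⇑w) kJ' jJ' x) * wave (⇑w) kJ jJ x)) := by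
        congr 1; funext x
        rw [map_mul, Complex.conj_conj]
        ring
    _ = ∫ x : ℝ, (∫ ξ : ℝ, 𝓕 (wave (⇑w) kI' jI') ξ * ce (x * ξ)) *
          (conj (wave (⇑w) kI jI x) * (conj (wave (⇑w) kJ' jJ' x) * wave (⇑w) kJ jJ x)) := by
        congr 1; funext x
        rw [wave_expand w kI' jI' x]
    _ = ∫ ξ1 : ℝ, 𝓕 (wave (⇑w) kI' jI') ξ1 * ∫ x : ℝ, ce (x * ξ1) *
          (conj (wave (⇑w) kI jI x) * (conj (wave (⇑w) kJ' jJ' x) * wave (⇑w) kJ jJ x)) :=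
        key _ _ (fun x ξ => ce (x * ξ)) (fourier_wave_continuous w kI' jI')
          (fourier_wave_integrable w kI' jI') hG1c hG1
          (ce_continuous.comp (continuous_fst.mul continuous_snd)) (fun _ _ => ce_norm _)
    _ = 0 := by
        refine integral_eq_zero_of_ae (Filter.Eventually.of_forall fun ξ1 => ?_)
        simp only [Pi.zero_apply]
        by_cases hm1 : (2:ℝ)^kI' * ξ1 ∈ Set.Icc (2/3 : ℝ) (8/3)
        · have hGa : Integrable (fun x : ℝ => ce (x * ξ1) *
              (conj (wave (⇑w) kJ' jJ' x) * wave (⇑w) kJ jJ x)) :=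
            hG2.bdd_mul (by exact (ce_continuous.comp (by fun_prop)).aestronglyMeasurable)
              (Filter.Eventually.of_forall fun x => le_of_eq (ce_norm _))
          have hGac : Continuous (fun x : ℝ => ce (x * ξ1) *
              (conj (wave (⇑w) kJ' jJ' x) * wave (⇑w) kJ jJ x)) := by
            exact (ce_continuous.comp (by fun_prop)).mul hG2c
          have hin : (∫ x : ℝ, ce (x * ξ1) * (conj (wave (⇑w) kI jI x) *
              (conj (wave (⇑w) kJ' jJ' x) * wave (⇑w) kJ jJ x))) = 0 := by
            calc ∫ x : ℝ, ce (x * ξ1) * (conj (wave (⇑w) kI jI x) *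
                  (conj (wave (⇑w) kJ' jJ' x) * wave (⇑w) kJ jJ x))
                = ∫ x : ℝ, (∫ ξ : ℝ, conj (𝓕 (wave (⇑w) kI jI) ξ) * ce (-(x * ξ))) *
                    (ce (x * ξ1) * (conj (wave (⇑w) kJ' jJ' x) * wave (⇑w) kJ jJ x)) := by
                  congr 1; funext x
                  rw [conj_wave_expand w kI jI x]
                  ring
              _ = ∫ ξ2 : ℝ, conj (𝓕 (wave (⇑w) kI jI) ξ2) * ∫ x : ℝ, ce (-(x * ξ2)) *
                    (ce (x * ξ1) * (conj (wave (⇑w) kJ' jJ' x) * wave (⇑w) kJ jJ x)) :=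
                  key _ _ (fun x ξ => ce (-(x * ξ)))
                    (by exact continuous_star.comp (fourier_wave_continuous w kI jI))
                    (integrable_conj' (fourier_wave_integrable w kI jI)
                      (fourier_wave_continuous w kI jI))
                    hGac hGa
                    (ce_continuous.comp (continuous_fst.mul continuous_snd).neg)
                    (fun _ _ => ce_norm _)
              _ = 0 := by
                  refine integral_eq_zero_of_ae (Filter.Eventually.of_forall fun ξ2 => ?_)
                  simp only [Pi.zero_apply]
                  by_cases hm2 : (2:ℝ)^kI * ξ2 ∈ Set.Icc (2/3 : ℝ) (8/3)
                  · have hGb : Integrable (fun x : ℝ => ce (-(x * ξ2)) *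
                        (ce (x * ξ1) * wave (⇑w) kJ jJ x)) := by
                      have h0 : Integrable (fun x : ℝ => ce (x * ξ1) * wave (⇑w) kJ jJ x) :=
                        hVint.bdd_mul
                          (by exact (ce_continuous.comp (by fun_prop)).aestronglyMeasurable)
                          (Filter.Eventually.of_forall fun x => le_of_eq (ce_norm _))
                      exact h0.bdd_mul
                        (by exact (ce_continuous.comp (by fun_prop)).aestronglyMeasurable)
                        (Filter.Eventually.of_forall fun x => le_of_eq (ce_norm _))
                    have hGbc : Continuous (fun x : ℝ => ce (-(x * ξ2)) *
                        (ce (x * ξ1) * wave (⇑w) kJ jJ x)) := by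
                      exact (ce_continuous.comp (by fun_prop)).mul
                        ((ce_continuous.comp (by fun_prop)).mul hVc)
                    have hin2 : (∫ x : ℝ, ce (-(x * ξ2)) * (ce (x * ξ1) *
                        (conj (wave (⇑w) kJ' jJ' x) * wave (⇑w) kJ jJ x))) = 0 := by
                      calc ∫ x : ℝ, ce (-(x * ξ2)) * (ce (x * ξ1) *
                            (conj (wave (⇑w) kJ' jJ' x) * wave (⇑w) kJ jJ x))
                          = ∫ x : ℝ, (∫ ξ : ℝ, conj (𝓕 (wave (⇑w) kJ' jJ') ξ) * ce (-(x * ξ))) *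
                              (ce (-(x * ξ2)) * (ce (x * ξ1) * wave (⇑w) kJ jJ x)) := by
                            congr 1; funext x
                            rw [conj_wave_expand w kJ' jJ' x]
                            ring
                        _ = ∫ ξ3 : ℝ, conj (𝓕 (wave (⇑w) kJ' jJ') ξ3) * ∫ x : ℝ, ce (-(x * ξ3)) *
                              (ce (-(x * ξ2)) * (ce (x * ξ1) * wave (⇑w) kJ jJ x)) :=
                            key _ _ (fun x ξ => ce (-(x * ξ)))
                              (by exact continuous_star.comp (fourier_wave_continuous w kJ' jJ'))
                              (integrable_conj' (fourier_wave_integrable w kJ' jJ')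
                                (fourier_wave_continuous w kJ' jJ'))
                              hGbc hGb
                              (ce_continuous.comp (continuous_fst.mul continuous_snd).neg)
                              (fun _ _ => ce_norm _)
                        _ = 0 := by
                            refine integral_eq_zero_of_ae
                              (Filter.Eventually.of_forall fun ξ3 => ?_)
                            simp only [Pi.zero_apply]
                            by_cases hm3 : (2:ℝ)^kJ' * ξ3 ∈ Set.Icc (2/3 : ℝ) (8/3)
                            · have hin3 : (∫ x : ℝ, ce (-(x * ξ3)) * (ce (-(x * ξ2)) *
                                  (ce (x * ξ1) * wave (⇑w) kJ jJ x)))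
                                  = 𝓕 (wave (⇑w) kJ jJ) (ξ2 + ξ3 - ξ1) := by
                                rw [fourier_eq]
                                congr 1; funext x
                                rw [show -(x * (ξ2 + ξ3 - ξ1))
                                    = -(x * ξ3) + (-(x * ξ2) + x * ξ1) by ring, ce_add, ce_add]
                                ring
                              rw [hin3, fourier_wave_vanish w hsupp kJ jJ _
                                (arith (two_zpow_pos kI') (two_zpow_pos kJ') hI hJ hIJ
                                  hm1 hm2 hm3), mul_zero]
                            · rw [fourier_wave_vanish w hsupp kJ' jJ' ξ3 hm3, map_zero, zero_mul]
                    rw [hin2, mul_zero]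
                  · rw [fourier_wave_vanish w hsupp kI jI ξ2 hm2, map_zero, zero_mul]
          rw [hin, mul_zero]
        · rw [fourier_wave_vanish w hsupp kI' jI' ξ1 hm1, zero_mul]
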